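/- Let L = Log(𝓕_L) with 𝓕_L a finite set of finite pointed frames, let φ be a modal formula and σ ⊆ sig(φ). Then for every modal formula χ with sig(χ) ⊆ σ, the following are equivalent: (1) χ is a strongest L(σ)-implicate of φ; (2) for every model (M,w) based on some (F,w) ∈ 𝓕_L: M,w ⊨ χ if and only if there exist (F',w') ∈ 𝓕_L and a model (M',w') based on (F',w') such that M',w' ∼_σ M,w and M',w' ⊨ φ. -/

import Mathlib

inductive MForm (α : Type) : Type
  | top : MForm α
  | atom : α → MForm α
  | neg : MForm α → MForm α
  | and : MForm α → MForm α → MForm α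
  | box : MForm α → MForm α
deriving DecidableEq

namespace MForm

def imp {α : Type} (φ ψ : MForm α) : MForm α := neg (and φ (neg ψ))

def dia {α : Type} (φ : MForm α) : MForm α := neg (box (neg φ))

def sig {α : Type} [DecidableEq α] : MForm α → Finset α
  | top => ∅
  | atom p => {p}
  | neg φ => sig φ
  | and φ ψ => sig φ ∪ sig ψ
  | box φ => sig φ

def IsProp {α : Type} : MForm α → Prop
  | top => True
  | atom _ => True
  | neg φ => IsProp φ
  | and φ ψ => IsProp φ ∧ IsProp ψ
  | box _ => False

def subf {α : Type} [DecidableEq α] : MForm α → Finset (MForm α)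
  | top => {top}
  | atom p => {atom p}
  | neg φ => insert (neg φ) (subf φ)
  | and φ ψ => insert (and φ ψ) (subf φ ∪ subf ψ)
  | box φ => insert (box φ) (subf φ)

/-- The dag-size of a formula: the number of its distinct subformulas. -/
def dagSize {α : Type} [DecidableEq α] (φ : MForm α) : ℕ := (subf φ).card

end MForm

def psat {α : Type} (v : α → Prop) : MForm α → Prop
  | .top => True
  | .atom p => v p
  | .neg φ => ¬ psat v φ
  | .and φ ψ => psat v φ ∧ psat v ψ
  | .box _ => True

/-- Propositional tautology. -/
def PTaut {α : Type} (φ : MForm α) : Prop := ∀ v : α → Prop, psat v φ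

def bigAnd {α : Type} : List (MForm α) → MForm α
  | [] => .top
  | φ :: l => .and φ (bigAnd l)

def bigOr {α : Type} (l : List (MForm α)) : MForm α := .neg (bigAnd (l.map .neg))

def boxIter {α : Type} : ℕ → MForm α → MForm α
  | 0, φ => φ
  | n + 1, φ => .box (boxIter n φ)

def diaIter {α : Type} : ℕ → MForm α → MForm α
  | 0, φ => φ
  | n + 1, φ => MForm.dia (diaIter n φ)

/-- `□^{≤n} φ`. -/
def ble {α : Type} (n : ℕ) (φ : MForm α) : MForm α :=
  bigAnd ((List.range (n + 1)).map (fun k => boxIter k φ))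

/-- `◇^{≤n} φ`. -/
def dle {α : Type} (n : ℕ) (φ : MForm α) : MForm α := .neg (ble n (.neg φ))

def substAtoms {α β : Type} (s : α → MForm β) : MForm α → MForm β
  | .top => .top
  | .atom a => s a
  | .neg φ => .neg (substAtoms s φ)
  | .and φ ψ => .and (substAtoms s φ) (substAtoms s ψ)
  | .box φ => .box (substAtoms s φ)

structure Frame where
  W : Type
  ne : Nonempty W
  R : W → W → Prop

structure PFrame extends Frame where
  pt : W

def sat (F : Frame) (V : F.W → ℕ → Prop) : F.W → MForm ℕ → Prop
  | w, .top => True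
  | w, .atom p => V w p
  | w, .neg φ => ¬ sat F V w φ
  | w, .and φ ψ => sat F V w φ ∧ sat F V w ψ
  | w, .box φ => ∀ v, F.R w v → sat F V v φ

def validAt (F : Frame) (w : F.W) (φ : MForm ℕ) : Prop := ∀ V, sat F V w φ

def Log (𝓕 : Set PFrame) : Set (MForm ℕ) := {φ | ∀ P ∈ 𝓕, validAt P.toFrame P.pt φ}

def Rooted (F : Frame) (w : F.W) : Prop := ∀ v, Relation.ReflTransGen F.R w v

def StrImp (L : Set (MForm ℕ)) (σ : Finset ℕ) (φ χ : MForm ℕ) : Prop :=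
  χ.sig ⊆ σ ∧ φ.imp χ ∈ L ∧
    ∀ ψ : MForm ℕ, ψ.sig ⊆ σ → φ.imp ψ ∈ L → χ.imp ψ ∈ L

def UnifInt (L : Set (MForm ℕ)) (σ : Finset ℕ) (φ χ : MForm ℕ) : Prop :=
  χ.sig ⊆ σ ∧ φ.imp χ ∈ L ∧
    ∀ ψ : MForm ℕ, ψ.sig ∩ φ.sig ⊆ σ → φ.imp ψ ∈ L → χ.imp ψ ∈ L

def CraigInt (L : Set (MForm ℕ)) (φ ψ χ : MForm ℕ) : Prop :=
  φ.imp χ ∈ L ∧ χ.imp ψ ∈ L ∧ χ.sig ⊆ φ.sig ∩ ψ.sig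

def HasCIP (L : Set (MForm ℕ)) : Prop :=
  ∀ φ ψ : MForm ℕ, φ.imp ψ ∈ L → ∃ χ, CraigInt L φ ψ χ

def IsBisim (σ : Finset ℕ) (F₁ : Frame) (V₁ : F₁.W → ℕ → Prop)
    (F₂ : Frame) (V₂ : F₂.W → ℕ → Prop) (Z : F₁.W → F₂.W → Prop) : Prop :=
  (∀ w₁ w₂, Z w₁ w₂ → ∀ p ∈ σ, (V₁ w₁ p ↔ V₂ w₂ p)) ∧
  (∀ w₁ w₂ v₁, Z w₁ w₂ → F₁.R w₁ v₁ → ∃ v₂, F₂.R w₂ v₂ ∧ Z v₁ v₂) ∧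
  (∀ w₁ w₂ v₂, Z w₁ w₂ → F₂.R w₂ v₂ → ∃ v₁, F₁.R w₁ v₁ ∧ Z v₁ v₂)

def Bisim (σ : Finset ℕ) (F₁ : Frame) (V₁ : F₁.W → ℕ → Prop) (w₁ : F₁.W)
    (F₂ : Frame) (V₂ : F₂.W → ℕ → Prop) (w₂ : F₂.W) : Prop :=
  ∃ Z, IsBisim σ F₁ V₁ F₂ V₂ Z ∧ Z w₁ w₂

def IsEME (σ : Finset ℕ) (Φ : Finset (MForm ℕ)) : Prop :=
  (∀ φ ∈ Φ, φ.IsProp ∧ φ.sig ⊆ σ) ∧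
  (∀ v : ℕ → Prop, ∃ φ ∈ Φ, psat v φ) ∧
  (∀ φ ∈ Φ, ∀ ψ ∈ Φ, φ ≠ ψ → ∀ v : ℕ → Prop, ¬ (psat v φ ∧ psat v ψ))

def IsCover (σ : Finset ℕ) (Φ : Finset (MForm ℕ)) (F : Frame) (V : F.W → ℕ → Prop) : Prop :=
  ∀ φ ∈ Φ, ∀ w₁ w₂, sat F V w₁ φ → sat F V w₂ φ →
    ∀ χ : MForm ℕ, χ.IsProp → χ.sig ⊆ σ → (sat F V w₁ χ ↔ sat F V w₂ χ)

noncomputable def coverFml (σ : Finset ℕ) (Φ : Finset (MForm ℕ)) (N : ℕ) : MForm ℕ :=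
  bigAnd (Φ.toList.map (fun φ => bigAnd (σ.toList.map (fun p =>
    MForm.imp (dle N (.and φ (.atom p))) (ble N (MForm.imp φ (.atom p)))))))

section Aux

open Classical

lemma sat_bigAnd (F : Frame) (V : F.W → ℕ → Prop) (w : F.W) (l : List (MForm ℕ)) :
    sat F V w (bigAnd l) ↔ ∀ θ ∈ l, sat F V w θ := by
  induction l with
  | nil => simp [bigAnd, sat]
  | cons a l ih => simp [bigAnd, sat, ih]

lemma sat_bigOr (F : Frame) (V : F.W → ℕ → Prop) (w : F.W) (l : List (MForm ℕ)) :
    sat F V w (bigOr l) ↔ ∃ θ ∈ l, sat F V w θ := by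
  simp only [bigOr, sat, sat_bigAnd]
  push_neg
  constructor
  · rintro ⟨θ, hθ, h⟩
    simp only [List.mem_map] at hθ
    obtain ⟨θ', hθ', rfl⟩ := hθ
    exact ⟨θ', hθ', by simpa [sat] using h⟩
  · rintro ⟨θ, hθ, h⟩
    exact ⟨.neg θ, List.mem_map_of_mem hθ, by simp [sat, h]⟩

lemma sat_imp (F : Frame) (V : F.W → ℕ → Prop) (w : F.W) (α β : MForm ℕ) :
    sat F V w (α.imp β) ↔ (sat F V w α → sat F V w β) := by
  simp only [MForm.imp, sat]; tauto

lemma sig_bigAnd_subset {σ : Finset ℕ} {l : List (MForm ℕ)}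
    (h : ∀ θ ∈ l, MForm.sig θ ⊆ σ) : (bigAnd l).sig ⊆ σ := by
  induction l with
  | nil => simp [bigAnd, MForm.sig]
  | cons a l ih =>
    simp only [bigAnd, MForm.sig, Finset.union_subset_iff]
    exact ⟨h a (by simp), ih fun θ hθ => h θ (by simp [hθ])⟩

lemma sig_bigOr_subset {σ : Finset ℕ} {l : List (MForm ℕ)}
    (h : ∀ θ ∈ l, MForm.sig θ ⊆ σ) : (bigOr l).sig ⊆ σ := by
  simp only [bigOr, MForm.sig]
  apply sig_bigAnd_subset
  intro θ hθ
  simp only [List.mem_map] at hθ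
  obtain ⟨θ', hθ', rfl⟩ := hθ
  exact h θ' hθ'

lemma sat_congr_val {σ : Finset ℕ} (F : Frame) (V V' : F.W → ℕ → Prop)
    (h : ∀ w, ∀ p ∈ σ, (V w p ↔ V' w p)) :
    ∀ (θ : MForm ℕ), θ.sig ⊆ σ → ∀ w, (sat F V w θ ↔ sat F V' w θ) := by
  intro θ
  induction θ with
  | top => intro _ w; simp [sat]
  | atom p => intro hs w; simp only [sat]; exact h w p (by simpa [MForm.sig] using hs)
  | neg α ih => intro hs w; simp only [sat]; rw [ih (by simpa [MForm.sig] using hs) w]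
  | and α β iha ihb =>
    intro hs w
    simp only [MForm.sig, Finset.union_subset_iff] at hs
    simp only [sat]; rw [iha hs.1 w, ihb hs.2 w]
  | box α ih =>
    intro hs w
    simp only [sat, MForm.sig] at *
    exact forall₂_congr fun v _ => ih hs v

lemma bisim_invariant {σ : Finset ℕ} {F₁ F₂ : Frame} {V₁ : F₁.W → ℕ → Prop}
    {V₂ : F₂.W → ℕ → Prop} {Z : F₁.W → F₂.W → Prop}
    (hZ : IsBisim σ F₁ V₁ F₂ V₂ Z) :
    ∀ (θ : MForm ℕ), θ.sig ⊆ σ → ∀ w₁ w₂, Z w₁ w₂ →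
      (sat F₁ V₁ w₁ θ ↔ sat F₂ V₂ w₂ θ) := by
  intro θ
  induction θ with
  | top => intro _ _ _ _; simp [sat]
  | atom p =>
    intro hs w₁ w₂ hw
    exact hZ.1 w₁ w₂ hw p (by simpa [MForm.sig] using hs)
  | neg α ih =>
    intro hs w₁ w₂ hw
    simp only [sat]; rw [ih (by simpa [MForm.sig] using hs) w₁ w₂ hw]
  | and α β iha ihb =>
    intro hs w₁ w₂ hw
    simp only [MForm.sig, Finset.union_subset_iff] at hs
    simp only [sat]; rw [iha hs.1 w₁ w₂ hw, ihb hs.2 w₁ w₂ hw]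
  | box α ih =>
    intro hs w₁ w₂ hw
    simp only [MForm.sig] at hs
    simp only [sat]
    constructor
    · intro h v₂ hr
      obtain ⟨v₁, hr₁, hv⟩ := hZ.2.2 w₁ w₂ v₂ hw hr
      exact (ih hs v₁ v₂ hv).mp (h v₁ hr₁)
    · intro h v₁ hr
      obtain ⟨v₂, hr₂, hv⟩ := hZ.2.1 w₁ w₂ v₁ hw hr
      exact (ih hs v₁ v₂ hv).mpr (h v₂ hr₂)

lemma id_bisim (σ : Finset ℕ) (F : Frame) (V : F.W → ℕ → Prop) :
    IsBisim σ F V F V (fun w₁ w₂ => w₁ = w₂) := by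
  refine ⟨?_, ?_, ?_⟩
  · rintro w₁ w₂ rfl p _; rfl
  · rintro w₁ w₂ v₁ rfl h; exact ⟨v₁, h, rfl⟩
  · rintro w₁ w₂ v₂ rfl h; exact ⟨v₂, h, rfl⟩

/-- Modal σ-equivalence. -/
def MEq (σ : Finset ℕ) (F₁ : Frame) (V₁ : F₁.W → ℕ → Prop) (w₁ : F₁.W)
    (F₂ : Frame) (V₂ : F₂.W → ℕ → Prop) (w₂ : F₂.W) : Prop :=
  ∀ θ : MForm ℕ, θ.sig ⊆ σ → (sat F₁ V₁ w₁ θ ↔ sat F₂ V₂ w₂ θ)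

lemma HM_forth (σ : Finset ℕ) (F₁ F₂ : Frame) (hf : Finite F₂.W)
    (V₁ : F₁.W → ℕ → Prop) (V₂ : F₂.W → ℕ → Prop) (w₁ : F₁.W) (w₂ : F₂.W) (v₁ : F₁.W)
    (hZ : MEq σ F₁ V₁ w₁ F₂ V₂ w₂) (hR : F₁.R w₁ v₁) :
    ∃ v₂, F₂.R w₂ v₂ ∧ MEq σ F₁ V₁ v₁ F₂ V₂ v₂ := by
  classical
  by_contra hcon
  push_neg at hcon
  have hsep : ∀ v₂ : F₂.W, ∃ θ : MForm ℕ, θ.sig ⊆ σ ∧ sat F₁ V₁ v₁ θ ∧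
      (F₂.R w₂ v₂ → ¬ sat F₂ V₂ v₂ θ) := by
    intro v₂
    by_cases hr : F₂.R w₂ v₂
    · have := hcon v₂ hr
      simp only [MEq, not_forall] at this
      obtain ⟨θ, hsig, hne⟩ := this
      by_cases h1 : sat F₁ V₁ v₁ θ
      · exact ⟨θ, hsig, h1, fun _ h2 => hne (iff_of_true h1 h2)⟩
      · refine ⟨.neg θ, by simpa [MForm.sig] using hsig, by simpa [sat] using h1, ?_⟩
        intro _ h2
        simp only [sat, not_not] at h2
        exact hne (iff_of_false h1 h2)
    · exact ⟨.top, by simp [MForm.sig], by simp [sat], fun hr' => absurd hr' hr⟩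
  choose θf hθsig hθv₁ hθv₂ using hsep
  haveI : Fintype F₂.W := Fintype.ofFinite _
  set γ : MForm ℕ := bigAnd ((Finset.univ : Finset F₂.W).toList.map θf) with hγ
  have hγsig : γ.sig ⊆ σ := by
    apply sig_bigAnd_subset
    intro θ hθ
    simp only [List.mem_map] at hθ
    obtain ⟨v₂, _, rfl⟩ := hθ
    exact hθsig v₂
  have hγv₁ : sat F₁ V₁ v₁ γ := by
    rw [hγ, sat_bigAnd]
    intro θ hθ
    simp only [List.mem_map] at hθ
    obtain ⟨v₂, _, rfl⟩ := hθ
    exact hθv₁ v₂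
  have hbox : sat F₂ V₂ w₂ (.box (.neg γ)) := by
    intro v₂ hr
    simp only [sat]
    intro hsat
    rw [hγ, sat_bigAnd] at hsat
    exact hθv₂ v₂ hr (hsat (θf v₂)
      (List.mem_map_of_mem (Finset.mem_toList.mpr (Finset.mem_univ v₂))))
  have hcontra := (hZ (.box (.neg γ)) (by simpa [MForm.sig] using hγsig)).mpr hbox v₁ hR
  simp only [sat] at hcontra
  exact hcontra hγv₁

lemma MEq_symm {σ : Finset ℕ} {F₁ F₂ : Frame} {V₁ : F₁.W → ℕ → Prop}
    {V₂ : F₂.W → ℕ → Prop} {w₁ : F₁.W} {w₂ : F₂.W}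
    (h : MEq σ F₁ V₁ w₁ F₂ V₂ w₂) : MEq σ F₂ V₂ w₂ F₁ V₁ w₁ :=
  fun θ hθ => (h θ hθ).symm

lemma HM_bisim (σ : Finset ℕ) (F₁ F₂ : Frame) (h1 : Finite F₁.W) (h2 : Finite F₂.W)
    (V₁ : F₁.W → ℕ → Prop) (V₂ : F₂.W → ℕ → Prop) :
    IsBisim σ F₁ V₁ F₂ V₂ (fun w₁ w₂ => MEq σ F₁ V₁ w₁ F₂ V₂ w₂) := by
  refine ⟨?_, ?_, ?_⟩
  · intro w₁ w₂ hw p hp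
    simpa [sat] using hw (.atom p) (by simpa [MForm.sig] using hp)
  · intro w₁ w₂ v₁ hw hr
    exact HM_forth σ F₁ F₂ h2 V₁ V₂ w₁ w₂ v₁ hw hr
  · intro w₁ w₂ v₂ hw hr
    obtain ⟨v₁, hr₁, hv⟩ := HM_forth σ F₂ F₁ h1 V₂ V₁ w₂ w₁ v₂ (MEq_symm hw) hr
    exact ⟨v₁, hr₁, MEq_symm hv⟩

/-- Promote a boolean σ-valuation to a Prop valuation. -/
def boolVal (σ : Finset ℕ) {W : Type} (b : W → {p // p ∈ σ} → Bool) : W → ℕ → Prop :=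
  fun w p => ∃ h : p ∈ σ, b w ⟨p, h⟩ = true

open Classical in
noncomputable def toBool (σ : Finset ℕ) {W : Type} (V : W → ℕ → Prop) :
    W → {p // p ∈ σ} → Bool :=
  fun w p => decide (V w p.1)

lemma boolVal_toBool (σ : Finset ℕ) {W : Type} (V : W → ℕ → Prop) :
    ∀ w, ∀ p ∈ σ, (boolVal σ (toBool σ V) w p ↔ V w p) := by
  intro w p hp
  constructor
  · rintro ⟨h, hb⟩
    exact of_decide_eq_true hb
  · intro h
    exact ⟨hp, decide_eq_true h⟩

end Aux


/-- The type of boolean-valued pointed models over the frames `Fr`. -/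
def TT {ι : Type} (Fr : ι → PFrame) (σ : Finset ℕ) : Type :=
  (j : ι) × (((Fr j).W → {p // p ∈ σ} → Bool) × (Fr j).W)

/-- bisimulation characterization of strongest implicates for logics determined
by a finite set of finite pointed frames (given as a finite family `Fr : ι → PFrame`). -/
theorem stmt1 {ι : Type} [Fintype ι] (Fr : ι → PFrame) (hfin : ∀ i, Finite (Fr i).W)
    (L : Set (MForm ℕ)) (hL : L = Log (Set.range Fr))
    (φ : MForm ℕ) (σ : Finset ℕ) (hσ : σ ⊆ φ.sig)
    (χ : MForm ℕ) (hχσ : χ.sig ⊆ σ) :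
    StrImp L σ φ χ ↔
      ∀ i, ∀ V : (Fr i).W → ℕ → Prop,
        (sat (Fr i).toFrame V (Fr i).pt χ ↔
          ∃ j, ∃ V' : (Fr j).W → ℕ → Prop,
            Bisim σ (Fr j).toFrame V' (Fr j).pt (Fr i).toFrame V (Fr i).pt ∧
            sat (Fr j).toFrame V' (Fr j).pt φ) := by
    classical
  haveI hWF : ∀ i, Fintype (Fr i).W := fun i => @Fintype.ofFinite _ (hfin i)
  have memL : ∀ θ : MForm ℕ, θ ∈ L ↔ ∀ j, ∀ V : (Fr j).W → ℕ → Prop,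
      sat (Fr j).toFrame V (Fr j).pt θ := by
    intro θ
    rw [hL]
    constructor
    · intro h j V
      exact h (Fr j) ⟨j, rfl⟩ V
    · rintro h P ⟨j, rfl⟩ V
      exact h j V
  constructor
  · rintro ⟨_, h1, h2⟩ i V
    constructor
    · intro hχ
      haveI : Fintype (TT Fr σ) := by
        unfold TT
        infer_instance
      have hsep : ∀ t s : TT Fr σ, ∃ θ : MForm ℕ, θ.sig ⊆ σ ∧
          sat (Fr t.1).toFrame (boolVal σ t.2.1) t.2.2 θ ∧
          (¬ MEq σ (Fr t.1).toFrame (boolVal σ t.2.1) t.2.2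
              (Fr s.1).toFrame (boolVal σ s.2.1) s.2.2 →
            ¬ sat (Fr s.1).toFrame (boolVal σ s.2.1) s.2.2 θ) := by
        intro t s
        by_cases hme : MEq σ (Fr t.1).toFrame (boolVal σ t.2.1) t.2.2
            (Fr s.1).toFrame (boolVal σ s.2.1) s.2.2
        · exact ⟨.top, by simp [MForm.sig], by simp [sat], fun h => absurd hme h⟩
        · have hme' := hme
          simp only [MEq, not_forall] at hme'
          obtain ⟨θ, hθσ, hne⟩ := hme'
          by_cases ht : sat (Fr t.1).toFrame (boolVal σ t.2.1) t.2.2 θ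
          · exact ⟨θ, hθσ, ht, fun _ hs2 => hne (iff_of_true ht hs2)⟩
          · refine ⟨.neg θ, by simpa [MForm.sig] using hθσ, ht, ?_⟩
            intro _ hnegs
            exact hne (iff_of_false ht hnegs)
      choose δ hδσ hδt hδs using hsep
      have hcharσ : ∀ t : TT Fr σ,
          (bigAnd ((Finset.univ : Finset (TT Fr σ)).toList.map (δ t))).sig ⊆ σ := by
        intro t
        apply sig_bigAnd_subset
        intro θ hθ
        simp only [List.mem_map] at hθ
        obtain ⟨u, _, rfl⟩ := hθ
        exact hδσ t u
      set Good : TT Fr σ → Prop := fun t => t.2.2 = (Fr t.1).pt ∧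
        ∃ V' : (Fr t.1).W → ℕ → Prop,
          (∀ w, ∀ p ∈ σ, (V' w p ↔ boolVal σ t.2.1 w p)) ∧
          sat (Fr t.1).toFrame V' (Fr t.1).pt φ with hGood
      set ψ : MForm ℕ := bigOr (((Finset.univ : Finset (TT Fr σ)).filter Good).toList.map
        (fun t => bigAnd ((Finset.univ : Finset (TT Fr σ)).toList.map (δ t)))) with hψ
      have hψσ : ψ.sig ⊆ σ := by
        apply sig_bigOr_subset
        intro θ hθ
        simp only [List.mem_map] at hθ
        obtain ⟨t, _, rfl⟩ := hθ
        exact hcharσ t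
      have hφψ : φ.imp ψ ∈ L := by
        rw [memL]
        intro j V₀
        rw [sat_imp]
        intro hsatφ
        have hgood : Good ⟨j, toBool σ V₀, (Fr j).pt⟩ :=
          ⟨rfl, V₀, fun w p hp => (boolVal_toBool σ V₀ w p hp).symm, hsatφ⟩
        rw [hψ, sat_bigOr]
        refine ⟨_, List.mem_map_of_mem (Finset.mem_toList.mpr
          (Finset.mem_filter.mpr ⟨Finset.mem_univ _, hgood⟩)), ?_⟩
        rw [sat_bigAnd]
        intro θ hθ
        simp only [List.mem_map] at hθ
        obtain ⟨u, _, rfl⟩ := hθ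
        exact (sat_congr_val (Fr j).toFrame _ V₀ (boolVal_toBool σ V₀) _
          (hδσ ⟨j, toBool σ V₀, (Fr j).pt⟩ u) _).mp (hδt ⟨j, toBool σ V₀, (Fr j).pt⟩ u)
      have hsatψ : sat (Fr i).toFrame V (Fr i).pt ψ :=
        (sat_imp _ _ _ _ _).mp ((memL _).mp (h2 ψ hψσ hφψ) i V) hχ
      rw [hψ, sat_bigOr] at hsatψ
      obtain ⟨θ, hθl, hsatθ⟩ := hsatψ
      simp only [List.mem_map, Finset.mem_toList, Finset.mem_filter] at hθl
      obtain ⟨t, ⟨_, hgood⟩, rfl⟩ := hθl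
      have hMEq_sV : MEq σ (Fr i).toFrame (boolVal σ (toBool σ V)) (Fr i).pt
          (Fr i).toFrame V (Fr i).pt :=
        fun θ hθ => sat_congr_val _ _ _ (boolVal_toBool σ V) θ hθ _
      have hMEq_ts : MEq σ (Fr t.1).toFrame (boolVal σ t.2.1) t.2.2
          (Fr i).toFrame (boolVal σ (toBool σ V)) (Fr i).pt := by
        by_contra hne
        have hnot := hδs t ⟨i, toBool σ V, (Fr i).pt⟩ hne
        rw [sat_bigAnd] at hsatθ
        have hsδ := hsatθ (δ t ⟨i, toBool σ V, (Fr i).pt⟩)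
          (List.mem_map_of_mem (Finset.mem_toList.mpr (Finset.mem_univ _)))
        exact hnot ((hMEq_sV _ (hδσ t ⟨i, toBool σ V, (Fr i).pt⟩)).mpr hsδ)
      have hMEq_tV : MEq σ (Fr t.1).toFrame (boolVal σ t.2.1) t.2.2
          (Fr i).toFrame V (Fr i).pt :=
        fun θ hθ => (hMEq_ts θ hθ).trans (hMEq_sV θ hθ)
      obtain ⟨hpt, V', hagree, hsatφ⟩ := hgood
      have hb := HM_bisim σ (Fr t.1).toFrame (Fr i).toFrame (hfin t.1) (hfin i)
        (boolVal σ t.2.1) V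
      refine ⟨t.1, V',
        ⟨fun w₁ w₂ => MEq σ (Fr t.1).toFrame (boolVal σ t.2.1) w₁ (Fr i).toFrame V w₂,
          ⟨?_, hb.2.1, hb.2.2⟩, hpt ▸ hMEq_tV⟩, hsatφ⟩
      intro w₁ w₂ hw p hp
      exact (hagree w₁ p hp).trans (hb.1 w₁ w₂ hw p hp)
    · rintro ⟨j, V', ⟨Z, hZ, hZpt⟩, hsatφ⟩
      have hsatχ := (sat_imp _ _ _ _ _).mp ((memL _).mp h1 j V') hsatφ
      exact (bisim_invariant hZ χ hχσ _ _ hZpt).mp hsatχ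
  · intro H
    refine ⟨hχσ, ?_, ?_⟩
    · rw [memL]
      intro i V
      rw [sat_imp]
      intro hφsat
      exact (H i V).mpr ⟨i, V, ⟨fun w₁ w₂ => w₁ = w₂, id_bisim σ _ V, rfl⟩, hφsat⟩
    · intro ψ hψσ hφψ
      rw [memL]
      intro i V
      rw [sat_imp]
      intro hχsat
      obtain ⟨j, V', ⟨Z, hZ, hZpt⟩, hsatφ⟩ := (H i V).mp hχsat
      have hsatψ := (sat_imp _ _ _ _ _).mp ((memL _).mp hφψ j V') hsatφ
      exact (bisim_invariant hZ ψ hψσ _ _ hZpt).mp hsatψ
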